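/- Let Φ be a finite set of points in ℝ² \ {0} with marks h_x > 0, x* a point of minimal norm, a > 1, and T > 0. If h_{x*} l₂(x*) > T · Σ_{y∈Φ\{x*}} h_y l₂(y), then h_{x*} l₂(a·x*) ≥ T · Σ_{y∈Φ\{x*}} h_y l₂(a·y); i.e., dilating all points by a factor a > 1 can only preserve or improve the SIR threshold event under the dual-slope path loss. -/

import Mathlib

open Real
open scoped Classical

noncomputable def dualSlope (Rc α₀ α₁ r : ℝ) : ℝ :=
  if r ≤ Rc then r ^ (-α₀) else Rc ^ (α₁ - α₀) * r ^ (-α₁)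

lemma dualSlope_pos {Rc α₀ α₁ r : ℝ} (hRc : 0 < Rc) (hr : 0 < r) :
    0 < dualSlope Rc α₀ α₁ r := by
  unfold dualSlope; split <;> positivity

lemma log_dualSlope {Rc α₀ α₁ r : ℝ} (hRc : 0 < Rc) (hr : 0 < r) :
    Real.log (dualSlope Rc α₀ α₁ r) =
      if r ≤ Rc then -α₀ * Real.log r
      else (α₁ - α₀) * Real.log Rc + -α₁ * Real.log r := by
  unfold dualSlope
  split
  · rw [Real.log_rpow hr]
  · rw [Real.log_mul (by positivity) (by positivity),
      Real.log_rpow hRc, Real.log_rpow hr]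

lemma dualSlope_key {Rc α₀ α₁ a r s : ℝ} (hRc : 0 < Rc) (hα₀ : 0 ≤ α₀)
    (hα : α₀ ≤ α₁) (ha : 1 < a) (hr : 0 < r) (hrs : r ≤ s) :
    dualSlope Rc α₀ α₁ (a * s) * dualSlope Rc α₀ α₁ r ≤
      dualSlope Rc α₀ α₁ (a * r) * dualSlope Rc α₀ α₁ s := by
  have ha0 : 0 < a := lt_trans one_pos ha
  have hs : 0 < s := lt_of_lt_of_le hr hrs
  have har : 0 < a * r := by positivity
  have has : 0 < a * s := by positivity
  rw [← Real.log_le_log_iff (mul_pos (dualSlope_pos hRc has) (dualSlope_pos hRc hr))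
      (mul_pos (dualSlope_pos hRc har) (dualSlope_pos hRc hs)),
    Real.log_mul (ne_of_gt (dualSlope_pos hRc has)) (ne_of_gt (dualSlope_pos hRc hr)),
    Real.log_mul (ne_of_gt (dualSlope_pos hRc har)) (ne_of_gt (dualSlope_pos hRc hs)),
    log_dualSlope hRc has, log_dualSlope hRc har, log_dualSlope hRc hr,
    log_dualSlope hRc hs]
  have iff1 : a * s ≤ Rc ↔ Real.log a + Real.log s ≤ Real.log Rc := by
    rw [← Real.log_mul (ne_of_gt ha0) (ne_of_gt hs), Real.log_le_log_iff has hRc]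
  have iff2 : a * r ≤ Rc ↔ Real.log a + Real.log r ≤ Real.log Rc := by
    rw [← Real.log_mul (ne_of_gt ha0) (ne_of_gt hr), Real.log_le_log_iff har hRc]
  have iff3 : r ≤ Rc ↔ Real.log r ≤ Real.log Rc := (Real.log_le_log_iff hr hRc).symm
  have iff4 : s ≤ Rc ↔ Real.log s ≤ Real.log Rc := (Real.log_le_log_iff hs hRc).symm
  rw [Real.log_mul (ne_of_gt ha0) (ne_of_gt hs), Real.log_mul (ne_of_gt ha0) (ne_of_gt hr)]
  simp only [iff1, iff2, iff3, iff4]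
  have hla : 0 < Real.log a := Real.log_pos ha
  have hlrs : Real.log r ≤ Real.log s := Real.log_le_log hr hrs
  have hd : 0 ≤ α₁ - α₀ := by linarith
  clear iff1 iff2 iff3 iff4 hrs hr hs har has ha ha0 hRc hα₀ hα
  generalize Real.log a = la at hla ⊢
  generalize Real.log r = lr at hlrs ⊢
  generalize Real.log s = ls at hlrs ⊢
  generalize Real.log Rc = lc
  split_ifs with h1 h2 h3 h4 h5 h6 h7 h8 h9 h10 h11 h12 h13 h14 h15 <;>
    (try push_neg at *) <;>
    nlinarith [mul_nonneg hd hla.le, mul_nonneg hd (sub_nonneg.mpr hlrs)]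

theorem stmt_6 (Rc α₀ α₁ T a : ℝ) (hRc : 0 < Rc) (hα₀ : 0 ≤ α₀) (hα : α₀ ≤ α₁)
    (hT : 0 < T) (ha : 1 < a)
    (Φ : Finset (EuclideanSpace ℝ (Fin 2))) (hΦ : ∀ y ∈ Φ, y ≠ 0)
    (h : EuclideanSpace ℝ (Fin 2) → ℝ) (hh : ∀ y ∈ Φ, 0 < h y)
    (xs : EuclideanSpace ℝ (Fin 2)) (hxs : xs ∈ Φ) (hmin : ∀ y ∈ Φ, ‖xs‖ ≤ ‖y‖)
    (hSIR : h xs * dualSlope Rc α₀ α₁ ‖xs‖ >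
      T * ∑ y ∈ Φ.erase xs, h y * dualSlope Rc α₀ α₁ ‖y‖) :
    h xs * dualSlope Rc α₀ α₁ ‖a • xs‖ ≥
      T * ∑ y ∈ Φ.erase xs, h y * dualSlope Rc α₀ α₁ ‖a • y‖ := by
  have ha0 : 0 < a := lt_trans one_pos ha
  have hnorm : ∀ y : EuclideanSpace ℝ (Fin 2), ‖a • y‖ = a * ‖y‖ := by
    intro y; rw [norm_smul, Real.norm_eq_abs, abs_of_pos ha0]
  have hxs0 : 0 < ‖xs‖ := norm_pos_iff.mpr (hΦ xs hxs)
  set d := dualSlope Rc α₀ α₁ ‖xs‖ with hd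
  set c := dualSlope Rc α₀ α₁ (a * ‖xs‖) with hc
  have hdpos : 0 < d := dualSlope_pos hRc hxs0
  have hcpos : 0 < c := dualSlope_pos hRc (by positivity)
  rw [ge_iff_le, ← mul_le_mul_iff_of_pos_right hdpos]
  have hsum : (∑ y ∈ Φ.erase xs, h y * dualSlope Rc α₀ α₁ ‖a • y‖) * d ≤
      c * ∑ y ∈ Φ.erase xs, h y * dualSlope Rc α₀ α₁ ‖y‖ := by
    rw [Finset.sum_mul, Finset.mul_sum]
    apply Finset.sum_le_sum
    intro y hy
    have hyΦ : y ∈ Φ := Finset.mem_of_mem_erase hy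
    have hy0 : 0 < ‖y‖ := norm_pos_iff.mpr (hΦ y hyΦ)
    have := dualSlope_key (α₀ := α₀) (α₁ := α₁) hRc hα₀ hα ha hxs0 (hmin y hyΦ)
    rw [hnorm]
    calc h y * dualSlope Rc α₀ α₁ (a * ‖y‖) * d
        = h y * (dualSlope Rc α₀ α₁ (a * ‖y‖) * d) := by ring
      _ ≤ h y * (c * dualSlope Rc α₀ α₁ ‖y‖) :=
          mul_le_mul_of_nonneg_left this (hh y hyΦ).le
      _ = c * (h y * dualSlope Rc α₀ α₁ ‖y‖) := by ring
  have : T * (∑ y ∈ Φ.erase xs, h y * dualSlope Rc α₀ α₁ ‖a • y‖) * d ≤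
      c * (T * ∑ y ∈ Φ.erase xs, h y * dualSlope Rc α₀ α₁ ‖y‖) := by
    calc T * (∑ y ∈ Φ.erase xs, h y * dualSlope Rc α₀ α₁ ‖a • y‖) * d
        = T * ((∑ y ∈ Φ.erase xs, h y * dualSlope Rc α₀ α₁ ‖a • y‖) * d) := by ring
      _ ≤ T * (c * ∑ y ∈ Φ.erase xs, h y * dualSlope Rc α₀ α₁ ‖y‖) :=
          mul_le_mul_of_nonneg_left hsum hT.le
      _ = c * (T * ∑ y ∈ Φ.erase xs, h y * dualSlope Rc α₀ α₁ ‖y‖) := by ring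
  calc T * (∑ y ∈ Φ.erase xs, h y * dualSlope Rc α₀ α₁ ‖a • y‖) * d
      ≤ c * (T * ∑ y ∈ Φ.erase xs, h y * dualSlope Rc α₀ α₁ ‖y‖) := this
    _ ≤ c * (h xs * d) := mul_le_mul_of_nonneg_left (le_of_lt hSIR) hcpos.le
    _ = h xs * dualSlope Rc α₀ α₁ ‖a • xs‖ * d := by rw [hnorm]; ring
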